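/- Let (E, ‖·‖) be a finite-dimensional ultrametrically normed vector space over a complete non-Archimedean algebraically closed valued field k with nontrivial valuation. For any α ∈ (0,1), there exists a norm ‖·‖_α on E admitting an orthonormal basis such that for all x ∈ E, ‖x‖ ≤ ‖x‖_α ≤ α^{-2}‖x‖; in particular the distance d(‖·‖_α, ‖·‖) := sup_{x≠0} |ln‖x‖_α - ln‖x‖| is at most -2 ln α. -/

import Mathlib

section Aux

variable {k E : Type*} [NontriviallyNormedField k]
  [AddCommGroup E] [Module k E]

private lemma myN_zero (N : E → ℝ) (hN0 : ∀ x : E, N x = 0 ↔ x = 0) : N 0 = 0 :=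
  (hN0 0).mpr rfl

private lemma myN_neg (N : E → ℝ)
    (hNsmul : ∀ (c : k) (x : E), N (c • x) = ‖c‖ * N x) (x : E) : N (-x) = N x := by
  have := hNsmul (-1) x
  simpa using this

private lemma myN_nonneg (N : E → ℝ) (hN0 : ∀ x : E, N x = 0 ↔ x = 0)
    (hNsmul : ∀ (c : k) (x : E), N (c • x) = ‖c‖ * N x)
    (hNultra : ∀ x y : E, N (x + y) ≤ max (N x) (N y)) (x : E) : 0 ≤ N x := by
  have h := hNultra x (-x)
  rw [add_neg_cancel, myN_zero N hN0, myN_neg N hNsmul, max_self] at h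
  exact h

private lemma myN_sub (N : E → ℝ)
    (hNsmul : ∀ (c : k) (x : E), N (c • x) = ‖c‖ * N x)
    (hNultra : ∀ x y : E, N (x + y) ≤ max (N x) (N y)) (x y : E) :
    N (x - y) ≤ max (N x) (N y) := by
  rw [sub_eq_add_neg]
  simpa [myN_neg N hNsmul] using hNultra x (-y)

private lemma myN_sum_le {ι : Type*} (N : E → ℝ) (hN0 : ∀ x : E, N x = 0 ↔ x = 0)
    (hNultra : ∀ x y : E, N (x + y) ≤ max (N x) (N y))
    (s : Finset ι) (f : ι → E) {C : ℝ} (hC : 0 ≤ C)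
    (h : ∀ i ∈ s, N (f i) ≤ C) : N (∑ i ∈ s, f i) ≤ C := by
  classical
  induction s using Finset.induction with
  | empty => simpa [myN_zero N hN0] using hC
  | insert a s' hx ih =>
      rw [Finset.sum_insert hx]
      refine le_trans (hNultra _ _) (max_le (h _ (Finset.mem_insert_self _ _)) ?_)
      exact ih fun i hi => h i (Finset.mem_insert_of_mem hi)

/-- Density of the value group of an algebraically closed nontrivially normed field. -/
private lemma exists_norm_between (k : Type*) [NontriviallyNormedField k] [IsAlgClosed k]
    {u v : ℝ} (hu : 0 < u) (huv : u < v) : ∃ c : k, u < ‖c‖ ∧ ‖c‖ ≤ v := by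
  obtain ⟨t, ht0, ht1⟩ := NormedField.exists_norm_lt_one k
  have hv0 : 0 < v := hu.trans huv
  have huv1 : u / v < 1 := (div_lt_one hv0).mpr huv
  obtain ⟨m, hm⟩ := exists_pow_lt_of_lt_one ht0 huv1
  have hm' : (u / v) ^ (m + 1) < ‖t‖ :=
    lt_of_le_of_lt (pow_le_pow_of_le_one (by positivity) huv1.le (Nat.le_succ m)) hm
  obtain ⟨r, hr⟩ := IsAlgClosed.exists_pow_nat_eq t (Nat.succ_pos m)
  have hrn : ‖r‖ ^ (m + 1) = ‖t‖ := by rw [← norm_pow, hr]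
  set ρ := ‖r‖ with hρdef
  have hr0 : r ≠ 0 := by
    intro h
    rw [h, zero_pow (Nat.succ_ne_zero m)] at hr
    rw [← hr, norm_zero] at ht0
    exact lt_irrefl _ ht0
  have hρ0 : 0 < ρ := norm_pos_iff.mpr hr0
  have hρ1 : ρ < 1 := by
    by_contra hcon
    push_neg at hcon
    have : (1 : ℝ) ≤ ρ ^ (m + 1) := one_le_pow₀ hcon
    rw [hrn] at this; linarith
  have hρuv : u / v < ρ := by
    refine lt_of_pow_lt_pow_left₀ (m + 1) hρ0.le ?_
    rw [hrn]; exact hm'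
  have hlogρ : Real.log ρ < 0 := Real.log_neg hρ0 hρ1
  set j : ℤ := ⌈Real.log v / Real.log ρ⌉ with hjdef
  refine ⟨r ^ j, ?_, ?_⟩
  · -- u < ‖r ^ j‖
    rw [norm_zpow]
    rw [← Real.log_lt_log_iff hu (zpow_pos hρ0 j), Real.log_zpow]
    have h1 : (j : ℝ) < Real.log v / Real.log ρ + 1 := by
      exact_mod_cast Int.ceil_lt_add_one (Real.log v / Real.log ρ)
    have h2 : (Real.log v / Real.log ρ + 1) * Real.log ρ < (j : ℝ) * Real.log ρ :=
      mul_lt_mul_of_neg_right h1 hlogρ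
    have h3 : (Real.log v / Real.log ρ + 1) * Real.log ρ = Real.log v + Real.log ρ := by
      rw [add_mul, one_mul, div_mul_cancel₀ _ hlogρ.ne]
    have h4 : Real.log u < Real.log v + Real.log ρ := by
      rw [← Real.log_mul hv0.ne' hρ0.ne']
      exact Real.log_lt_log hu (by rwa [div_lt_iff₀ hv0, mul_comm] at hρuv)
    linarith
  · -- ‖r ^ j‖ ≤ v
    rw [norm_zpow]
    rw [← Real.log_le_log_iff (zpow_pos hρ0 j) hv0, Real.log_zpow]
    have h1 : Real.log v / Real.log ρ ≤ (j : ℝ) := Int.le_ceil _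
    have h2 : (j : ℝ) * Real.log ρ ≤ (Real.log v / Real.log ρ) * Real.log ρ :=
      mul_le_mul_of_nonpos_right h1 hlogρ.le
    rw [div_mul_cancel₀ _ hlogρ.ne] at h2
    exact h2

end Aux

section OrthFamily

variable {k E : Type*} [NontriviallyNormedField k] [CompleteSpace k]
  [AddCommGroup E] [Module k E] [FiniteDimensional k E]

/-- Existence of β-orthogonal families spanning a given submodule. -/
private lemma exists_orth_family
    (N : E → ℝ)
    (hN0 : ∀ x : E, N x = 0 ↔ x = 0)
    (hNsmul : ∀ (c : k) (x : E), N (c • x) = ‖c‖ * N x)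
    (hNultra : ∀ x y : E, N (x + y) ≤ max (N x) (N y)) :
    ∀ (n : ℕ) (β : ℝ), 0 < β → β < 1 → ∀ H : Submodule k E, Module.finrank k H = n →
    ∃ v : Fin n → E, (∀ i, v i ∈ H) ∧ Submodule.span k (Set.range v) = H ∧
      (∀ i, 0 < N (v i)) ∧
      ∀ (c : Fin n → k) (i : Fin n), β * (‖c i‖ * N (v i)) ≤ N (∑ j, c j • v j) := by
  have hNnn := myN_nonneg N hN0 hNsmul hNultra
  intro n
  induction n with
  | zero =>
      intro β hβ0 hβ1 H hH
      refine ⟨Fin.elim0, fun i => i.elim0, ?_, fun i => i.elim0, fun c i => i.elim0⟩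
      have hbot : H = ⊥ := Submodule.finrank_eq_zero.mp hH
      rw [hbot]
      simp [Set.range_eq_empty]
  | succ n IH =>
      intro β hβ0 hβ1 H' hH'
      set γ := Real.sqrt β with hγdef
      have hγ0 : 0 < γ := Real.sqrt_pos.mpr hβ0
      have hγ1 : γ < 1 := by
        have := Real.sqrt_lt_sqrt hβ0.le hβ1
        rwa [Real.sqrt_one] at this
      have hγγ : γ * γ = β := Real.mul_self_sqrt hβ0.le
      -- basis of H', viewed inside E
      let B : Module.Basis (Fin (n + 1)) k ↥H' := Module.finBasisOfFinrankEq k ↥H' hH'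
      set u : Fin (n + 1) → E := fun i => ((B i : ↥H') : E) with hudef
      have hu : LinearIndependent k u :=
        B.linearIndependent.map' H'.subtype (Submodule.ker_subtype H')
      have huH' : ∀ i, u i ∈ H' := fun i => (B i).2
      have hspanu : Submodule.span k (Set.range u) = H' := by
        have h1 : Set.range u = H'.subtype '' Set.range B := by
          rw [← Set.range_comp]; rfl
        rw [h1, ← Submodule.map_span, B.span_eq, Submodule.map_top, Submodule.range_subtype]
      set H : Submodule k E := Submodule.span k (Set.range (u ∘ Fin.castSucc)) with hHdef
      have hHsub : H ≤ H' := by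
        rw [hHdef]
        refine Submodule.span_le.mpr ?_
        rintro y ⟨i, rfl⟩
        exact huH' _
      have hfr : Module.finrank k H = n := by
        rw [hHdef, finrank_span_eq_card (hu.comp Fin.castSucc (Fin.castSucc_injective n))]
        simp
      obtain ⟨v, hvH, hvspan, hvpos, hvorth⟩ := IH γ hγ0 hγ1 H hfr
      set x := u (Fin.last n) with hxdef
      have hxH' : x ∈ H' := huH' _
      have hxH : x ∉ H := by
        have h1 : Set.range (u ∘ Fin.castSucc) = u '' Set.range Fin.castSucc :=
          Set.range_comp u Fin.castSucc
        rw [hHdef, h1]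
        refine LinearIndependent.notMem_span_image hu ?_
        rintro ⟨j, hj⟩
        exact absurd hj (ne_of_lt (Fin.castSucc_lt_last j))
      -- positive distance to H
      have key : ∃ ε > (0:ℝ), ∀ h ∈ H, ε ≤ N (x - h) := by
        by_contra hcon
        push_neg at hcon
        have hseq : ∀ m : ℕ, ∃ h, h ∈ H ∧ N (x - h) < (1/2:ℝ) ^ m := by
          intro m
          obtain ⟨h, hh1, hh2⟩ := hcon ((1/2:ℝ) ^ m) (by positivity)
          exact ⟨h, hh1, hh2⟩
        choose h hhH hhlt using hseq
        have hcoord : ∀ m, ∃ c : Fin n → k, ∑ i, c i • v i = h m := by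
          intro m
          exact (Submodule.mem_span_range_iff_exists_fun k).mp (by rw [hvspan]; exact hhH m)
        choose c hc using hcoord
        have hdiff : ∀ m l : ℕ, ∀ i, γ * (‖c m i - c l i‖ * N (v i)) ≤
            max ((1/2:ℝ) ^ m) ((1/2:ℝ) ^ l) := by
          intro m l i
          have h1 : ∑ j, (c m j - c l j) • v j = h m - h l := by
            simp only [sub_smul, Finset.sum_sub_distrib, hc]
          have h2 := hvorth (fun j => c m j - c l j) i
          rw [h1] at h2
          refine h2.trans ?_
          have h3 : h m - h l = (x - h l) - (x - h m) := by abel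
          rw [h3]
          refine (myN_sub N hNsmul hNultra _ _).trans ?_
          exact max_le ((hhlt l).le.trans (le_max_right _ _))
            ((hhlt m).le.trans (le_max_left _ _))
        have hcauchy : ∀ i, CauchySeq (fun m => c m i) := by
          intro i
          refine cauchySeq_of_le_geometric (1/2) ((γ * N (v i))⁻¹) (by norm_num) ?_
          intro m
          rw [dist_eq_norm]
          have h1 := hdiff m (m + 1) i
          have h2 : max ((1/2:ℝ) ^ m) ((1/2:ℝ) ^ (m+1)) = (1/2:ℝ) ^ m := by
            rw [max_eq_left]
            exact pow_le_pow_of_le_one (by norm_num) (by norm_num) (Nat.le_succ m)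
          rw [h2] at h1
          have h3 : 0 < γ * N (v i) := mul_pos hγ0 (hvpos i)
          rw [inv_mul_eq_div, le_div_iff₀ h3]
          calc ‖c m i - c (m+1) i‖ * (γ * N (v i))
              = γ * (‖c m i - c (m+1) i‖ * N (v i)) := by ring
            _ ≤ (1/2:ℝ) ^ m := h1
        choose L hL using fun i => cauchySeq_tendsto_of_complete (hcauchy i)
        apply hxH
        have hx0 : x = ∑ i, L i • v i := by
          have hle : ∀ ε : ℝ, 0 < ε → N (x - ∑ i, L i • v i) ≤ ε := by
            intro ε hε
            have hev1 : ∀ᶠ m in Filter.atTop, ∀ i, ‖c m i - L i‖ * N (v i) < ε := by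
              rw [Filter.eventually_all]
              intro i
              have ht : Filter.Tendsto (fun m => ‖c m i - L i‖ * N (v i))
                  Filter.atTop (nhds (0 * N (v i))) :=
                (tendsto_iff_norm_sub_tendsto_zero.mp (hL i)).mul_const _
              rw [zero_mul] at ht
              exact ht.eventually (gt_mem_nhds hε)
            have hev2 : ∀ᶠ m : ℕ in Filter.atTop, (1/2:ℝ) ^ m < ε :=
              (tendsto_pow_atTop_nhds_zero_of_lt_one (by norm_num) (by norm_num)).eventually
                (gt_mem_nhds hε)
            obtain ⟨m, hm1, hm2⟩ := (hev1.and hev2).exists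
            have hstep : N (x - ∑ i, L i • v i) ≤
                max (N (x - h m)) (N (h m - ∑ i, L i • v i)) := by
              have : x - ∑ i, L i • v i = (x - h m) + (h m - ∑ i, L i • v i) := by abel
              rw [this]
              exact hNultra _ _
            refine hstep.trans (max_le ((hhlt m).le.trans hm2.le) ?_)
            have hsum : h m - ∑ i, L i • v i = ∑ i, (c m i - L i) • v i := by
              simp only [sub_smul, Finset.sum_sub_distrib, hc]
            rw [hsum]
            refine myN_sum_le N hN0 hNultra _ _ hε.le ?_
            intro i _
            rw [hNsmul]
            exact (hm1 i).le
          have h0 : N (x - ∑ i, L i • v i) ≤ 0 := by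
            by_contra hcon2
            push_neg at hcon2
            have := hle (N (x - ∑ i, L i • v i) / 2) (by linarith)
            linarith
          have := le_antisymm h0 (hNnn _)
          exact sub_eq_zero.mp ((hN0 _).mp this)
        rw [hx0]
        exact Submodule.sum_mem _ fun i _ => Submodule.smul_mem _ _ (hvH i)
      obtain ⟨ε, hε0, hεle⟩ := key
      set S : Set ℝ := (fun h => N (x - h)) '' (H : Set E) with hSdef
      have hSne : S.Nonempty := ⟨N (x - 0), 0, H.zero_mem, rfl⟩
      have hSlb : ∀ r ∈ S, ε ≤ r := by
        rintro r ⟨h, hh, rfl⟩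
        exact hεle h hh
      set d := sInf S with hddef
      have hSbdd : BddBelow S := ⟨ε, hSlb⟩
      have hd_le : ∀ h ∈ H, d ≤ N (x - h) := fun h hh => csInf_le hSbdd ⟨h, hh, rfl⟩
      have hdpos : 0 < d := lt_of_lt_of_le hε0 (le_csInf hSne hSlb)
      have hdd : d < d / γ := by
        rw [lt_div_iff₀ hγ0]
        nlinarith
      obtain ⟨r, hrS, hrlt⟩ := exists_lt_of_csInf_lt hSne hdd
      obtain ⟨h₀, hh₀H, hr0⟩ := hrS
      have hr0' : N (x - h₀) = r := by simpa using hr0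
      set e := x - h₀ with hedef
      have hNe_lt : N e < d / γ := by rw [hedef, hr0']; exact hrlt
      have hNe_ge : d ≤ N e := hd_le h₀ hh₀H
      have hNepos : 0 < N e := hdpos.trans_le hNe_ge
      have hγNe : γ * N e < d := by
        rw [lt_div_iff₀ hγ0] at hNe_lt
        linarith [hNe_lt]
      have hebound : ∀ h ∈ H, γ * N e ≤ N (e + h) := by
        intro h hh
        have h1 : e + h = x - (h₀ - h) := by rw [hedef]; abel
        rw [h1]
        exact hγNe.le.trans (hd_le _ (H.sub_mem hh₀H hh))
      set w : Fin (n + 1) → E := Fin.snoc v e with hwdef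
      have hwmem : ∀ i, w i ∈ H' := by
        intro i
        refine Fin.lastCases ?_ ?_ i
        · rw [hwdef]; simp only [Fin.snoc_last]
          exact H'.sub_mem hxH' (hHsub hh₀H)
        · intro j
          rw [hwdef]; simp only [Fin.snoc_castSucc]
          exact hHsub (hvH j)
      have hrange_sub : Set.range v ⊆ Set.range w := by
        rintro y ⟨j, rfl⟩
        exact ⟨Fin.castSucc j, by rw [hwdef]; simp⟩
      have hHle : H ≤ Submodule.span k (Set.range w) := by
        rw [← hvspan]
        exact Submodule.span_mono hrange_sub
      refine ⟨w, hwmem, ?_, ?_, ?_⟩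
      · -- span
        apply le_antisymm
        · refine Submodule.span_le.mpr ?_
          rintro y ⟨i, rfl⟩
          exact hwmem i
        · rw [← hspanu]
          refine Submodule.span_le.mpr ?_
          rintro y ⟨i, rfl⟩
          refine Fin.lastCases ?_ ?_ i
          · have hx_eq : u (Fin.last n) = e + h₀ := by rw [hedef, hxdef]; abel
            rw [hx_eq]
            refine Submodule.add_mem _ ?_ (hHle hh₀H)
            exact Submodule.subset_span ⟨Fin.last n, by rw [hwdef]; simp⟩
          · intro j
            refine hHle ?_
            rw [hHdef]
            exact Submodule.subset_span ⟨j, rfl⟩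
      · -- positivity
        intro i
        refine Fin.lastCases ?_ ?_ i
        · rw [hwdef]; simp only [Fin.snoc_last]; exact hNepos
        · intro j; rw [hwdef]; simp only [Fin.snoc_castSucc]; exact hvpos j
      · -- orthogonality
        intro cc i
        set cL := cc (Fin.last n) with hcLdef
        set hs : E := ∑ j : Fin n, cc (Fin.castSucc j) • v j with hhsdef
        have hsum_eq : ∑ j, cc j • w j = hs + cL • e := by
          rw [Fin.sum_univ_castSucc]
          rw [hwdef]
          simp only [Fin.snoc_castSucc, Fin.snoc_last]
          rfl
        have hhsH : hs ∈ H := Submodule.sum_mem _ fun j _ => H.smul_mem _ (hvH j)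
        set s : E := ∑ j, cc j • w j with hsdef2
        have hNs_nonneg : 0 ≤ N s := hNnn s
        have hlast : γ * (‖cL‖ * N e) ≤ N s := by
          rcases eq_or_ne cL 0 with h0 | h0
          · rw [h0]; simpa using hNs_nonneg
          · have h1 : s = cL • (e + cL⁻¹ • hs) := by
              rw [smul_add, smul_smul, mul_inv_cancel₀ h0, one_smul, hsum_eq]
              abel
            rw [h1, hNsmul]
            have h2 := hebound (cL⁻¹ • hs) (H.smul_mem _ hhsH)
            calc γ * (‖cL‖ * N e) = ‖cL‖ * (γ * N e) := by ring
              _ ≤ ‖cL‖ * N (e + cL⁻¹ • hs) :=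
                  mul_le_mul_of_nonneg_left h2 (norm_nonneg _)
        have hhs_le : N hs ≤ N s / γ := by
          have h1 : hs = s - cL • e := by rw [hsum_eq]; abel
          have h2 : N (cL • e) ≤ N s / γ := by
            rw [hNsmul, le_div_iff₀ hγ0]
            calc ‖cL‖ * N e * γ = γ * (‖cL‖ * N e) := by ring
              _ ≤ N s := hlast
          have h3 : N s ≤ N s / γ := by
            rw [le_div_iff₀ hγ0]
            nlinarith
          rw [h1]
          exact (myN_sub N hNsmul hNultra _ _).trans (max_le h3 h2)
        refine Fin.lastCases ?_ ?_ i
        · rw [hwdef]; simp only [Fin.snoc_last]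
          have hXnn : 0 ≤ ‖cL‖ * N e := mul_nonneg (norm_nonneg _) hNepos.le
          calc β * (‖cc (Fin.last n)‖ * N e) ≤ γ * (‖cL‖ * N e) := by
                rw [← hcLdef]
                apply mul_le_mul_of_nonneg_right _ hXnn
                nlinarith
            _ ≤ N s := hlast
        · intro j
          rw [hwdef]; simp only [Fin.snoc_castSucc]
          have h1 := hvorth (fun j => cc (Fin.castSucc j)) j
          rw [← hhsdef] at h1
          calc β * (‖cc (Fin.castSucc j)‖ * N (v j))
              = γ * (γ * (‖cc (Fin.castSucc j)‖ * N (v j))) := by rw [← hγγ]; ring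
            _ ≤ γ * N hs := mul_le_mul_of_nonneg_left h1 hγ0.le
            _ ≤ γ * (N s / γ) := mul_le_mul_of_nonneg_left hhs_le hγ0.le
            _ = N s := by field_simp

end OrthFamily

/-- Let `(E, N)` be a finite-dimensional ultrametrically normed vector space
over a complete non-Archimedean algebraically closed valued field `k` with nontrivial
valuation.  For any `α ∈ (0,1)`, there exists a norm `Nα` on `E` admitting an orthonormal
basis such that `N x ≤ Nα x ≤ α⁻² · N x` for all `x`; in particular the distance
`d(Nα, N) = sup_{x ≠ 0} |ln (Nα x) - ln (N x)|` is at most `-2 ln α`. -/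
theorem approximation_by_orthonormally_decomposable_norm
    {k E : Type*} [NontriviallyNormedField k] [CompleteSpace k] [IsAlgClosed k]
    (hk : ∀ x y : k, ‖x + y‖ ≤ max ‖x‖ ‖y‖)
    [AddCommGroup E] [Module k E] [FiniteDimensional k E]
    (N : E → ℝ)
    (hN0 : ∀ x : E, N x = 0 ↔ x = 0)
    (hNsmul : ∀ (c : k) (x : E), N (c • x) = ‖c‖ * N x)
    (hNultra : ∀ x y : E, N (x + y) ≤ max (N x) (N y))
    (α : ℝ) (hα0 : 0 < α) (hα1 : α < 1) :
    ∃ Nα : E → ℝ,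
      (∃ (n : ℕ) (b : Module.Basis (Fin n) k E), ∀ x : E, Nα x = ⨆ i, ‖b.repr x i‖) ∧
      (∀ x : E, N x ≤ Nα x ∧ Nα x ≤ α⁻¹ ^ 2 * N x) ∧
      (∀ x : E, x ≠ 0 → |Real.log (Nα x) - Real.log (N x)| ≤ -2 * Real.log α) := by
  classical
  have hNnn := myN_nonneg N hN0 hNsmul hNultra
  set n := Module.finrank k E with hndef
  obtain ⟨v, -, hvspan, hvpos, hvorth⟩ :=
    exists_orth_family N hN0 hNsmul hNultra n α hα0 hα1 ⊤ (finrank_top k E)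
  -- rescale so that α < N (e i) ≤ 1
  have hscale : ∀ i : Fin n, ∃ s : k, α / N (v i) < ‖s‖ ∧ ‖s‖ ≤ 1 / N (v i) := by
    intro i
    refine exists_norm_between k (div_pos hα0 (hvpos i)) ?_
    exact div_lt_div_of_pos_right hα1 (hvpos i)
  choose s hs1 hs2 using hscale
  have hs0 : ∀ i, s i ≠ 0 := by
    intro i h
    have h1 := hs1 i
    rw [h, norm_zero] at h1
    exact absurd h1 (not_lt.mpr (div_pos hα0 (hvpos i)).le)
  set e : Fin n → E := fun i => s i • v i with hedef
  have hNe_eq : ∀ i, N (e i) = ‖s i‖ * N (v i) := by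
    intro i
    simp only [hedef]
    exact hNsmul _ _
  have hNe_gt : ∀ i, α < N (e i) := by
    intro i
    have h1 := hs1 i
    rw [div_lt_iff₀ (hvpos i)] at h1
    rw [hNe_eq i]; linarith
  have hNe_le : ∀ i, N (e i) ≤ 1 := by
    intro i
    have h1 := hs2 i
    rw [le_div_iff₀ (hvpos i)] at h1
    rw [hNe_eq i]; linarith
  -- basis
  have hle_span : ⊤ ≤ Submodule.span k (Set.range e) := by
    rw [← hvspan]
    refine Submodule.span_le.mpr ?_
    rintro y ⟨i, rfl⟩
    have : v i = (s i)⁻¹ • e i := by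
      rw [hedef]; simp only; rw [smul_smul, inv_mul_cancel₀ (hs0 i), one_smul]
    rw [this]
    exact Submodule.smul_mem _ _ (Submodule.subset_span ⟨i, rfl⟩)
  have hcard : Fintype.card (Fin n) = Module.finrank k E := by simp [hndef]
  set b : Module.Basis (Fin n) k E := basisOfTopLeSpanOfCardEqFinrank e hle_span hcard with hbdef
  have hb : ⇑b = e := coe_basisOfTopLeSpanOfCardEqFinrank e hle_span hcard
  -- orthogonality for e
  have horth : ∀ (c : Fin n → k) (i : Fin n),
      α * (‖c i‖ * N (e i)) ≤ N (∑ j, c j • e j) := by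
    intro c i
    have h1 := hvorth (fun j => c j * s j) i
    have h2 : ∑ j, (c j * s j) • v j = ∑ j, c j • e j := by
      refine Finset.sum_congr rfl fun j _ => ?_
      rw [hedef]; simp only; rw [smul_smul]
    rw [h2] at h1
    have h3 : ‖c i * s i‖ * N (v i) = ‖c i‖ * N (e i) := by
      rw [norm_mul, hedef]; simp only; rw [hNsmul]; ring
    rw [h3] at h1
    exact h1
  have hrepr : ∀ x : E, ∑ i, b.repr x i • e i = x := by
    intro x
    conv_rhs => rw [← b.sum_repr x]
    refine Finset.sum_congr rfl fun i _ => ?_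
    rw [hb]
  have hupper : ∀ x : E, N x ≤ ⨆ i, ‖b.repr x i‖ := by
    intro x
    have hiSup_nn : 0 ≤ ⨆ i, ‖b.repr x i‖ := Real.iSup_nonneg fun i => norm_nonneg _
    conv_lhs => rw [← hrepr x]
    refine myN_sum_le N hN0 hNultra _ _ hiSup_nn ?_
    intro i _
    rw [hNsmul]
    calc ‖b.repr x i‖ * N (e i) ≤ ‖b.repr x i‖ * 1 :=
          mul_le_mul_of_nonneg_left (hNe_le i) (norm_nonneg _)
      _ = ‖b.repr x i‖ := mul_one _
      _ ≤ ⨆ j, ‖b.repr x j‖ :=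
          le_ciSup (f := fun j => ‖b.repr x j‖) (Finite.bddAbove_range _) i
  have hlower : ∀ x : E, (⨆ i, ‖b.repr x i‖) ≤ α⁻¹ ^ 2 * N x := by
    intro x
    rcases isEmpty_or_nonempty (Fin n) with hemp | hne
    · rw [Real.iSup_of_isEmpty]
      exact mul_nonneg (by positivity) (hNnn x)
    · refine ciSup_le fun i => ?_
      have h1 := horth (fun i => b.repr x i) i
      rw [hrepr x] at h1
      have h2 : α * (‖b.repr x i‖ * α) ≤ α * (‖b.repr x i‖ * N (e i)) := by
        refine mul_le_mul_of_nonneg_left ?_ hα0.le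
        exact mul_le_mul_of_nonneg_left (hNe_gt i).le (norm_nonneg _)
      have h3 : ‖b.repr x i‖ * α ^ 2 ≤ N x := by nlinarith
      rw [inv_pow, ← div_eq_inv_mul, le_div_iff₀ (by positivity)]
      exact h3
  refine ⟨fun x => ⨆ i, ‖b.repr x i‖, ⟨n, b, fun x => rfl⟩,
    fun x => ⟨hupper x, hlower x⟩, ?_⟩
  intro x hx
  have hNx : 0 < N x := by
    rcases (hNnn x).lt_or_eq with h | h
    · exact h
    · exact absurd ((hN0 x).mp h.symm) hx
  have hT1 := hupper x
  have hT2 := hlower x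
  have hTpos : 0 < ⨆ i, ‖b.repr x i‖ := hNx.trans_le hT1
  rw [abs_of_nonneg (sub_nonneg.mpr ((Real.log_le_log_iff hNx hTpos).mpr hT1))]
  have hlog : Real.log (⨆ i, ‖b.repr x i‖) ≤ Real.log (α⁻¹ ^ 2 * N x) :=
    (Real.log_le_log_iff hTpos (by positivity)).mpr hT2
  rw [Real.log_mul (by positivity) hNx.ne', Real.log_pow, Real.log_inv] at hlog
  push_cast at hlog
  linarith
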